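/- arXiv:1802.07811 — 5 statements merged into one kernel-verified Lean document; each statement's English description precedes it below -/
import Mathlib

section
/- Let x + y√p be an indecomposable element of the ring of integers of Q(√p) (p squarefree, x, y ∈ (1/2)Z). If x + y√p is decomposable (a sum of two totally positive integers) in the biquadratic field K = Q(√p,√q), then min{q, r} < 16x², where r = pq/gcd(p,q)². -/
lemma sf_not_isSquare {n : ℕ} (h2 : 2 ≤ n) (hsf : Squarefree n) : ¬ IsSquare n := by
  rintro ⟨k, hk⟩
  have hk1 : IsUnit k := hsf k (by rw [hk])
  rw [Nat.isUnit_iff] at hk1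
  rw [hk1, mul_one] at hk
  omega

lemma irr_sqrt {n : ℕ} (h2 : 2 ≤ n) (hsf : Squarefree n) : Irrational (Real.sqrt n) :=
  irrational_sqrt_natCast_iff.mpr (sf_not_isSquare h2 hsf)

lemma rat_coeff {ξ : ℝ} (hi : Irrational ξ) {K M : ℚ} (h : (K : ℝ) * ξ = M) :
    K = 0 ∧ M = 0 := by
  rcases eq_or_ne K 0 with h0 | h0
  · refine ⟨h0, ?_⟩
    have hM : (M : ℝ) = 0 := by rw [← h, h0]; push_cast; ring
    exact_mod_cast hM
  · exact absurd ⟨M / K, by push_cast; field_simp; linarith [h]⟩ hi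

lemma indep2 {n : ℕ} (hi : Irrational (Real.sqrt n)) {a b : ℚ}
    (h : (a : ℝ) + b * Real.sqrt n = 0) : a = 0 ∧ b = 0 := by
  have hh := rat_coeff hi (K := b) (M := -a) (by push_cast; linarith)
  refine ⟨?_, hh.1⟩
  have := hh.2
  simpa [neg_eq_zero] using this

lemma sqrt_mul_sqrt (m n k c : ℕ) (h : m * n = c ^ 2 * k) :
    Real.sqrt m * Real.sqrt n = c * Real.sqrt k := by
  rw [← Real.sqrt_mul (by positivity),
    show ((m : ℝ) * n) = (c : ℝ) ^ 2 * k by exact_mod_cast h,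
    Real.sqrt_mul (by positivity), Real.sqrt_sq (by positivity)]

lemma indep4 (p q r p₁ q₁ g : ℕ)
    (hpr : p * r = p₁ ^ 2 * q) (hqr : q * r = q₁ ^ 2 * p) (hpq : p * q = g ^ 2 * r)
    (hip : Irrational (Real.sqrt p)) (hiq : Irrational (Real.sqrt q))
    (hir : Irrational (Real.sqrt r))
    {a b c d : ℚ} (h : (a : ℝ) + b * Real.sqrt p + c * Real.sqrt q + d * Real.sqrt r = 0) :
    a = 0 ∧ b = 0 ∧ c = 0 ∧ d = 0 := by
  have hp0 : p ≠ 0 := by rintro rfl; simp at hip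
  have hq0 : q ≠ 0 := by rintro rfl; simp at hiq
  have hr0 : r ≠ 0 := by rintro rfl; simp at hir
  have hg0 : g ≠ 0 := by
    rintro rfl
    rw [pow_two, Nat.zero_mul, Nat.zero_mul] at hpq
    exact (Nat.mul_ne_zero hp0 hq0) hpq
  set sp := Real.sqrt p with hsp_def
  set sq := Real.sqrt q with hsq_def
  set sr := Real.sqrt r with hsr_def
  have hsp : sp ^ 2 = (p : ℝ) := Real.sq_sqrt (by positivity)
  have hsq : sq ^ 2 = (q : ℝ) := Real.sq_sqrt (by positivity)
  have hsr : sr ^ 2 = (r : ℝ) := Real.sq_sqrt (by positivity)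
  have hqr' : sq * sr = (q₁ : ℝ) * sp := sqrt_mul_sqrt q r p q₁ hqr
  have hpr' : sp * sr = (p₁ : ℝ) * sq := sqrt_mul_sqrt p r q p₁ hpr
  -- first grouping
  have e1 : ((a : ℝ) + b * sp) ^ 2 = ((c : ℝ) * sq + d * sr) ^ 2 := by
    have hh : (a : ℝ) + b * sp = -((c : ℝ) * sq + d * sr) := by linarith
    rw [hh]; ring
  have key1 : ((2*a*b - 2*c*d*q₁ : ℚ) : ℝ) * sp = ((c^2*q + d^2*r - a^2 - b^2*p : ℚ) : ℝ) := by
    push_cast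
    linear_combination e1 - (b : ℝ)^2 * hsp + (c : ℝ)^2 * hsq + (d : ℝ)^2 * hsr
      + 2 * (c : ℝ) * (d : ℝ) * hqr'
  obtain ⟨-, hM1⟩ := rat_coeff hip key1
  -- second grouping
  have e2 : ((a : ℝ) + c * sq) ^ 2 = ((b : ℝ) * sp + d * sr) ^ 2 := by
    have hh : (a : ℝ) + c * sq = -((b : ℝ) * sp + d * sr) := by linarith
    rw [hh]; ring
  have key2 : ((2*a*c - 2*b*d*p₁ : ℚ) : ℝ) * sq = ((b^2*p + d^2*r - a^2 - c^2*q : ℚ) : ℝ) := by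
    push_cast
    linear_combination e2 - (c : ℝ)^2 * hsq + (b : ℝ)^2 * hsp + (d : ℝ)^2 * hsr
      + 2 * (b : ℝ) * (d : ℝ) * hpr'
  obtain ⟨-, hM2⟩ := rat_coeff hiq key2
  -- rational equations: a^2 = r d^2 and p b^2 = q c^2
  have hA : a^2 = (r : ℚ) * d^2 := by linarith [hM1, hM2]
  have hB : (p : ℚ) * b^2 = (q : ℚ) * c^2 := by linarith [hM1, hM2]
  have hd : d = 0 := by
    by_contra hd0
    apply hir
    refine ⟨|a / d|, ?_⟩
    have h1 : ((|a / d| : ℚ) : ℝ) ^ 2 = (r : ℝ) := by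
      push_cast [abs_div]
      rw [div_pow]
      rw [sq_abs, sq_abs]
      rw [div_eq_iff (by positivity)]
      exact_mod_cast hA
    rw [← Real.sqrt_sq (by positivity : (0:ℝ) ≤ ((|a / d| : ℚ) : ℝ)), h1]
  have ha : a = 0 := by
    have : a ^ 2 = 0 := by rw [hA, hd]; ring
    exact pow_eq_zero_iff (by norm_num) |>.mp this
  have hb : b = 0 := by
    by_contra hb0
    have hgr : Irrational ((g : ℝ) * sr) := hir.natCast_mul hg0
    apply hgr
    set t : ℚ := q * c / b with ht
    refine ⟨|t|, ?_⟩
    have hBc : (p : ℝ) * (b:ℝ)^2 = (q:ℝ) * (c:ℝ)^2 := by exact_mod_cast hB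
    have hgr2 : ((g:ℝ) * sr) ^ 2 = (p : ℝ) * q := by
      rw [mul_pow, hsr]; exact_mod_cast hpq.symm
    have h1 : ((t : ℚ) : ℝ) ^ 2 = ((g:ℝ) * sr) ^ 2 := by
      rw [hgr2, ht]
      push_cast
      rw [div_pow, div_eq_iff (by positivity)]
      linear_combination (-(q : ℝ)) * hBc
    have h2 : (g:ℝ) * sr = |((t : ℚ) : ℝ)| := by
      rw [← Real.sqrt_sq (by positivity : (0:ℝ) ≤ (g:ℝ) * sr), ← h1, Real.sqrt_sq_eq_abs]
    rw [h2]
    exact Rat.cast_abs t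
  have hc : c = 0 := by
    have : (q : ℚ) * c^2 = 0 := by rw [← hB, hb]; ring
    have hq0' : (q : ℚ) ≠ 0 := by exact_mod_cast hq0
    have := mul_eq_zero.mp this
    rcases this with h' | h'
    · exact absurd h' hq0'
    · exact pow_eq_zero_iff (by norm_num) |>.mp h'
  exact ⟨ha, hb, hc, hd⟩

def m4 (p q r qg pg g : ℚ) (v w : ℚ × ℚ × ℚ × ℚ) : ℚ × ℚ × ℚ × ℚ :=
  (v.1 * w.1 + p * (v.2.1 * w.2.1) + q * (v.2.2.1 * w.2.2.1) + r * (v.2.2.2 * w.2.2.2),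
   v.1 * w.2.1 + v.2.1 * w.1 + qg * (v.2.2.1 * w.2.2.2 + v.2.2.2 * w.2.2.1),
   v.1 * w.2.2.1 + v.2.2.1 * w.1 + pg * (v.2.1 * w.2.2.2 + v.2.2.2 * w.2.1),
   v.1 * w.2.2.2 + v.2.2.2 * w.1 + g * (v.2.1 * w.2.2.1 + v.2.2.1 * w.2.1))

def pow4 (p q r qg pg g : ℚ) (v : ℚ × ℚ × ℚ × ℚ) : ℕ → ℚ × ℚ × ℚ × ℚ
  | 0 => (1, 0, 0, 0)
  | n + 1 => m4 p q r qg pg g v (pow4 p q r qg pg g v n)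

noncomputable def ev4 (P Q R : ℝ) (v : ℚ × ℚ × ℚ × ℚ) : ℝ :=
  (v.1 : ℝ) + (v.2.1 : ℝ) * P + (v.2.2.1 : ℝ) * Q + (v.2.2.2 : ℝ) * R

def Rel4 (p q r qg pg g : ℚ) (P Q R : ℝ) : Prop :=
  P ^ 2 = (p : ℝ) ∧ Q ^ 2 = (q : ℝ) ∧ R ^ 2 = (r : ℝ) ∧
    P * Q = (g : ℝ) * R ∧ P * R = (pg : ℝ) * Q ∧ Q * R = (qg : ℝ) * P

lemma ev4_m4 {p q r qg pg g : ℚ} {P Q R : ℝ} (hrel : Rel4 p q r qg pg g P Q R)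
    (v w : ℚ × ℚ × ℚ × ℚ) :
    ev4 P Q R (m4 p q r qg pg g v w) = ev4 P Q R v * ev4 P Q R w := by
  obtain ⟨h1, h2, h3, h4, h5, h6⟩ := hrel
  simp only [ev4, m4]
  push_cast
  linear_combination (-(v.2.1 : ℝ) * (w.2.1 : ℝ)) * h1 + (-(v.2.2.1 : ℝ) * (w.2.2.1 : ℝ)) * h2
    + (-(v.2.2.2 : ℝ) * (w.2.2.2 : ℝ)) * h3
    + (-((v.2.1 : ℝ) * (w.2.2.1 : ℝ) + (v.2.2.1 : ℝ) * (w.2.1 : ℝ))) * h4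
    + (-((v.2.1 : ℝ) * (w.2.2.2 : ℝ) + (v.2.2.2 : ℝ) * (w.2.1 : ℝ))) * h5
    + (-((v.2.2.1 : ℝ) * (w.2.2.2 : ℝ) + (v.2.2.2 : ℝ) * (w.2.2.1 : ℝ))) * h6

lemma ev4_pow {p q r qg pg g : ℚ} {P Q R : ℝ} (hrel : Rel4 p q r qg pg g P Q R)
    (v : ℚ × ℚ × ℚ × ℚ) (n : ℕ) :
    ev4 P Q R (pow4 p q r qg pg g v n) = (ev4 P Q R v) ^ n := by
  induction n with
  | zero => simp [pow4, ev4]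
  | succ n ih => rw [pow4, ev4_m4 hrel, ih, pow_succ]; ring

lemma ev4_add (P Q R : ℝ) (v w : ℚ × ℚ × ℚ × ℚ) :
    ev4 P Q R (v + w) = ev4 P Q R v + ev4 P Q R w := by
  simp only [ev4, Prod.fst_add, Prod.snd_add]
  push_cast
  ring

lemma ev4_zero (P Q R : ℝ) : ev4 P Q R 0 = 0 := by
  simp [ev4]

lemma ev4_zsmul (P Q R : ℝ) (n : ℤ) (v : ℚ × ℚ × ℚ × ℚ) :
    ev4 P Q R (n • v) = (n : ℝ) * ev4 P Q R v := by
  rcases v with ⟨v1, v2, v3, v4⟩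
  simp only [ev4, Prod.smul_mk, zsmul_eq_mul]
  push_cast
  ring

lemma ev4_sum (P Q R : ℝ) (s : Finset ℕ) (F : ℕ → ℚ × ℚ × ℚ × ℚ) :
    ev4 P Q R (∑ i ∈ s, F i) = ∑ i ∈ s, ev4 P Q R (F i) := by
  classical
  induction s using Finset.induction with
  | empty => simp [ev4_zero]
  | insert _ _ hni ih => rw [Finset.sum_insert hni, Finset.sum_insert hni, ev4_add, ih]

lemma conj4 {p q r qg pg g : ℚ} {P Q R P' Q' R' : ℝ}
    (hrel : Rel4 p q r qg pg g P Q R) (hrel' : Rel4 p q r qg pg g P' Q' R')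
    (hinj : ∀ a b c d : ℚ, (a : ℝ) + b * P + c * Q + d * R = 0 →
      a = 0 ∧ b = 0 ∧ c = 0 ∧ d = 0)
    {v : ℚ × ℚ × ℚ × ℚ} (h : IsIntegral ℤ (ev4 P Q R v)) :
    IsIntegral ℤ (ev4 P' Q' R' v) := by
  obtain ⟨f, hf, hev⟩ := h
  refine ⟨f, hf, ?_⟩
  set F : ℚ × ℚ × ℚ × ℚ :=
    ∑ i ∈ Finset.range (f.natDegree + 1), f.coeff i • pow4 p q r qg pg g v i with hF
  have key : ∀ (P₀ Q₀ R₀ : ℝ), Rel4 p q r qg pg g P₀ Q₀ R₀ →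
      ev4 P₀ Q₀ R₀ F = Polynomial.eval₂ (algebraMap ℤ ℝ) (ev4 P₀ Q₀ R₀ v) f := by
    intro P₀ Q₀ R₀ hrel₀
    rw [Polynomial.eval₂_eq_sum_range, hF, ev4_sum]
    refine Finset.sum_congr rfl fun i _ => ?_
    rw [ev4_zsmul, ev4_pow hrel₀]
    norm_num [algebraMap_int_eq, eq_intCast]
  have h0 : ev4 P Q R F = 0 := by rw [key P Q R hrel]; exact hev
  obtain ⟨h1, h2, h3, h4⟩ := hinj F.1 F.2.1 F.2.2.1 F.2.2.2 (by
    have : ev4 P Q R F = (F.1 : ℝ) + F.2.1 * P + F.2.2.1 * Q + F.2.2.2 * R := rfl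
    rw [← this]; exact h0)
  have hz : ev4 P' Q' R' F = 0 := by
    simp [ev4, h1, h2, h3, h4]
  rw [← key P' Q' R' hrel']
  exact hz

def m2 (q : ℚ) (v w : ℚ × ℚ) : ℚ × ℚ :=
  (v.1 * w.1 + q * (v.2 * w.2), v.1 * w.2 + v.2 * w.1)

def pow2 (q : ℚ) (v : ℚ × ℚ) : ℕ → ℚ × ℚ
  | 0 => (1, 0)
  | n + 1 => m2 q v (pow2 q v n)

noncomputable def ev2 (Q : ℝ) (v : ℚ × ℚ) : ℝ := (v.1 : ℝ) + (v.2 : ℝ) * Q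

lemma ev2_m2 {q : ℚ} {Q : ℝ} (hQ : Q ^ 2 = (q : ℝ)) (v w : ℚ × ℚ) :
    ev2 Q (m2 q v w) = ev2 Q v * ev2 Q w := by
  simp only [ev2, m2]
  push_cast
  linear_combination (-(v.2 : ℝ) * (w.2 : ℝ)) * hQ

lemma ev2_pow {q : ℚ} {Q : ℝ} (hQ : Q ^ 2 = (q : ℝ)) (v : ℚ × ℚ) (n : ℕ) :
    ev2 Q (pow2 q v n) = (ev2 Q v) ^ n := by
  induction n with
  | zero => simp [pow2, ev2]
  | succ n ih => rw [pow2, ev2_m2 hQ, ih, pow_succ]; ring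

lemma ev2_add (Q : ℝ) (v w : ℚ × ℚ) : ev2 Q (v + w) = ev2 Q v + ev2 Q w := by
  simp only [ev2, Prod.fst_add, Prod.snd_add]
  push_cast
  ring

lemma ev2_zsmul (Q : ℝ) (n : ℤ) (v : ℚ × ℚ) : ev2 Q (n • v) = (n : ℝ) * ev2 Q v := by
  rcases v with ⟨v1, v2⟩
  simp only [ev2, Prod.smul_mk, zsmul_eq_mul]
  push_cast
  ring

lemma ev2_sum (Q : ℝ) (s : Finset ℕ) (F : ℕ → ℚ × ℚ) :
    ev2 Q (∑ i ∈ s, F i) = ∑ i ∈ s, ev2 Q (F i) := by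
  classical
  induction s using Finset.induction with
  | empty => simp [ev2]
  | insert _ _ hni ih => rw [Finset.sum_insert hni, Finset.sum_insert hni, ev2_add, ih]

lemma conj2 {q : ℚ} {Q Q' : ℝ} (hQ : Q ^ 2 = (q : ℝ)) (hQ' : Q' ^ 2 = (q : ℝ))
    (hinj : ∀ a b : ℚ, (a : ℝ) + b * Q = 0 → a = 0 ∧ b = 0)
    {v : ℚ × ℚ} (h : IsIntegral ℤ (ev2 Q v)) : IsIntegral ℤ (ev2 Q' v) := by
  obtain ⟨f, hf, hev⟩ := h
  refine ⟨f, hf, ?_⟩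
  set F : ℚ × ℚ := ∑ i ∈ Finset.range (f.natDegree + 1), f.coeff i • pow2 q v i with hF
  have key : ∀ (Q₀ : ℝ), Q₀ ^ 2 = (q : ℝ) →
      ev2 Q₀ F = Polynomial.eval₂ (algebraMap ℤ ℝ) (ev2 Q₀ v) f := by
    intro Q₀ hq₀
    rw [Polynomial.eval₂_eq_sum_range, hF, ev2_sum]
    refine Finset.sum_congr rfl fun i _ => ?_
    rw [ev2_zsmul, ev2_pow hq₀]
    norm_num [algebraMap_int_eq, eq_intCast]
  have h0 : ev2 Q F = 0 := by rw [key Q hQ]; exact hev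
  obtain ⟨h1, h2⟩ := hinj F.1 F.2 h0
  have hz : ev2 Q' F = 0 := by simp [ev2, h1, h2]
  rw [← key Q' hQ']
  exact hz

lemma rat_int {t : ℚ} (h : IsIntegral ℤ ((t : ℝ))) : ∃ n : ℤ, (n : ℚ) = t := by
  have h2 : IsIntegral ℤ t := by
    have heq : algebraMap ℚ ℝ t = (t : ℝ) := rfl
    rw [← heq] at h
    exact (isIntegral_algebraMap_iff (algebraMap ℚ ℝ).injective).mp h
  obtain ⟨y, hy⟩ := IsIntegrallyClosed.isIntegral_iff.mp h2
  exact ⟨y, by exact_mod_cast hy⟩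

lemma half_int {m : ℕ} (hsf : Squarefree m) {f : ℚ} {N : ℤ} (hN : (N : ℚ) = 4 * m * f ^ 2) :
    ∃ k : ℤ, (k : ℚ) = 2 * f := by
  set t : ℚ := 2 * f with ht
  have hNt : (N : ℚ) = m * t ^ 2 := by rw [hN, ht]; ring
  refine ⟨t.num, ?_⟩
  have hden : t.den = 1 := by
    have heq : N * (t.den : ℤ) ^ 2 = (m : ℤ) * t.num ^ 2 := by
      have h1 : (t : ℚ) = (t.num : ℚ) / (t.den : ℚ) := by exact_mod_cast (Rat.num_div_den t).symm
      have hden0 : ((t.den : ℚ)) ≠ 0 := by exact_mod_cast t.den_nz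
      rw [h1] at hNt
      field_simp at hNt
      exact_mod_cast hNt
    have hdvd : (t.den : ℤ) ^ 2 ∣ (m : ℤ) * t.num ^ 2 := ⟨N, by linarith [heq]⟩
    have hdvd2 : t.den ^ 2 ∣ m * t.num.natAbs ^ 2 := by
      have := Int.natAbs_dvd_natAbs.mpr hdvd
      simpa [Int.natAbs_mul, Int.natAbs_pow] using this
    have hcop : (t.den ^ 2).Coprime (t.num.natAbs ^ 2) := Nat.Coprime.pow 2 2 t.reduced.symm
    have hdvd3 : t.den ^ 2 ∣ m := (Nat.Coprime.dvd_of_dvd_mul_right hcop) hdvd2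
    have : IsUnit t.den := hsf t.den (by rw [← pow_two]; exact hdvd3)
    exact Nat.isUnit_iff.mp this
  exact Rat.coe_int_num_of_den_eq_one hden

lemma keyQ {m : ℕ} (hsf : Squarefree m) {e f : ℚ} (hf : f ≠ 0)
    (h1 : IsIntegral ℤ ((e : ℝ) + f * Real.sqrt m))
    (h2 : IsIntegral ℤ ((e : ℝ) - f * Real.sqrt m)) :
    (1 : ℝ) / 2 ≤ |(f : ℝ)| := by
  have hm0 : m ≠ 0 := hsf.ne_zero
  have hsq : (Real.sqrt m) ^ 2 = (m : ℝ) := Real.sq_sqrt (by positivity)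
  obtain ⟨n₁, hn₁⟩ : ∃ n : ℤ, (n : ℚ) = 2 * e := by
    apply rat_int
    have := h1.add h2
    have heq : ((e : ℝ) + f * Real.sqrt m) + ((e : ℝ) - f * Real.sqrt m) = ((2 * e : ℚ) : ℝ) := by
      push_cast; ring
    rwa [heq] at this
  obtain ⟨n₂, hn₂⟩ : ∃ n : ℤ, (n : ℚ) = e ^ 2 - f ^ 2 * m := by
    apply rat_int
    have := h1.mul h2
    have heq : ((e : ℝ) + f * Real.sqrt m) * ((e : ℝ) - f * Real.sqrt m)
        = ((e ^ 2 - f ^ 2 * m : ℚ) : ℝ) := by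
      push_cast
      linear_combination (-(f:ℝ)^2) * hsq
    rwa [heq] at this
  obtain ⟨k, hk⟩ := half_int hsf (N := n₁ ^ 2 - 4 * n₂) (f := f)
    (by push_cast; rw [show ((n₁ : ℚ)) = 2 * e from hn₁, show ((n₂ : ℚ)) = e^2 - f^2*m from hn₂]; ring)
  have hk0 : k ≠ 0 := by
    rintro rfl
    simp only [Int.cast_zero] at hk
    apply hf
    linarith [hk]
  have : (1 : ℚ) ≤ |(k : ℚ)| := by
    have : (1 : ℤ) ≤ |k| := Int.one_le_abs hk0
    exact_mod_cast this
  have h2f : |(f : ℝ)| = |((k : ℚ) : ℝ)| / 2 := by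
    have : ((k : ℚ) : ℝ) = 2 * (f : ℝ) := by exact_mod_cast hk
    rw [this, abs_mul]
    norm_num
  rw [h2f]
  have : (1 : ℝ) ≤ |((k : ℚ) : ℝ)| := by exact_mod_cast this
  linarith

/-- The four real embeddings of the biquadratic field `Q(√p,√q)` applied to the element
`a + b√p + c√q + d√r` (given by the quadruple `v = (a,b,c,d)` of rationals); the signs
`s, t ∈ {1,-1}` determine the embedding: `√p ↦ s√p`, `√q ↦ t√q`, `√r ↦ st√r`. -/
noncomputable def emb (p q r : ℕ) (s t : ℤ) (v : ℚ × ℚ × ℚ × ℚ) : ℝ :=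
  (v.1 : ℝ) + (s : ℝ) * (v.2.1 : ℝ) * Real.sqrt p + (t : ℝ) * (v.2.2.1 : ℝ) * Real.sqrt q
    + (s : ℝ) * (t : ℝ) * (v.2.2.2 : ℝ) * Real.sqrt r

/-- The possible signs. -/
def Sgn : Set ℤ := {1, -1}

/-- Total positivity: all four embeddings are positive. -/
def TotPos (p q r : ℕ) (v : ℚ × ℚ × ℚ × ℚ) : Prop :=
  ∀ s ∈ Sgn, ∀ t ∈ Sgn, 0 < emb p q r s t v

/-- Membership in the ring of integers of `Q(√p,√q)`. -/
def IsIntK (p q r : ℕ) (v : ℚ × ℚ × ℚ × ℚ) : Prop :=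
  IsIntegral ℤ (emb p q r 1 1 v)

/-- Indecomposability: totally positive and not a sum of two totally positive integers. -/
def Indec (p q r : ℕ) (v : ℚ × ℚ × ℚ × ℚ) : Prop :=
  TotPos p q r v ∧ IsIntK p q r v ∧
    ¬ ∃ β γ : ℚ × ℚ × ℚ × ℚ, IsIntK p q r β ∧ IsIntK p q r γ ∧
      TotPos p q r β ∧ TotPos p q r γ ∧ β + γ = v

set_option maxHeartbeats 2000000 in
theorem stmt_4 (p q r : ℕ) (hp : Squarefree p) (hq : Squarefree q) (hpq : p ≠ q)
    (hp0 : 0 < p) (hq0 : 0 < q) (hr : r = p * q / (Nat.gcd p q) ^ 2)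
    (x y : ℚ) (hx : ∃ m : ℤ, x = m / 2) (hy : ∃ m : ℤ, y = m / 2)
    (hint : IsIntegral ℤ ((x : ℝ) + (y : ℝ) * Real.sqrt p))
    (hposq : 0 < (x : ℝ) + (y : ℝ) * Real.sqrt p ∧ 0 < (x : ℝ) - (y : ℝ) * Real.sqrt p)
    (hindq : ¬ ∃ x₁ y₁ x₂ y₂ : ℚ,
      IsIntegral ℤ ((x₁ : ℝ) + (y₁ : ℝ) * Real.sqrt p) ∧
      IsIntegral ℤ ((x₂ : ℝ) + (y₂ : ℝ) * Real.sqrt p) ∧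
      (0 < (x₁ : ℝ) + (y₁ : ℝ) * Real.sqrt p ∧ 0 < (x₁ : ℝ) - (y₁ : ℝ) * Real.sqrt p) ∧
      (0 < (x₂ : ℝ) + (y₂ : ℝ) * Real.sqrt p ∧ 0 < (x₂ : ℝ) - (y₂ : ℝ) * Real.sqrt p) ∧
      x₁ + x₂ = x ∧ y₁ + y₂ = y)
    (hdec : ∃ β γ : ℚ × ℚ × ℚ × ℚ, IsIntK p q r β ∧ IsIntK p q r γ ∧
      TotPos p q r β ∧ TotPos p q r γ ∧ β + γ = (x, y, 0, 0)) :
    ((min q r : ℕ) : ℚ) < 16 * x ^ 2 := by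
  have hs1 : (1 : ℤ) ∈ Sgn := Or.inl rfl
  have hsm1 : (-1 : ℤ) ∈ Sgn := Or.inr rfl
  obtain ⟨⟨a, b, c, d⟩, ⟨a', b', c', d'⟩, hβint, hγint, hβpos, hγpos, hsum⟩ := hdec
  have hsum' : a + a' = x ∧ b + b' = y ∧ c + c' = 0 ∧ d + d' = 0 := by
    simpa [Prod.ext_iff] using hsum
  obtain ⟨hxa, hyb, hc0, hd0⟩ := hsum'
  have ha' : a' = x - a := by linarith
  have hb' : b' = y - b := by linarith
  have hc' : c' = -c := by linarith
  have hd' : d' = -d := by linarith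
  subst ha' hb' hc' hd'
  rcases Nat.lt_or_ge q 2 with hq2 | hq2
  · -- q = 1 : contradiction with hindq
    have hq1 : q = 1 := by omega
    subst hq1
    have hrp : r = p := by
      rw [hr, Nat.gcd_one_right]
      simp
    exfalso
    apply hindq
    refine ⟨a + c, b + d, (x - a) + (-c), (y - b) + (-d), ?_, ?_, ⟨?_, ?_⟩, ⟨?_, ?_⟩, by ring, by ring⟩
    · have e : emb p 1 r 1 1 (a, b, c, d) = ((a + c : ℚ) : ℝ) + ((b + d : ℚ) : ℝ) * Real.sqrt p := by
        simp [emb, hrp]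
        push_cast
        ring
      rw [← e]; exact hβint
    · have e : emb p 1 r 1 1 (x - a, y - b, -c, -d)
          = (((x - a) + (-c) : ℚ) : ℝ) + (((y - b) + (-d) : ℚ) : ℝ) * Real.sqrt p := by
        simp [emb, hrp]
        push_cast
        ring
      rw [← e]; exact hγint
    · have h := hβpos 1 hs1 1 hs1
      convert h using 2
      simp [emb, hrp]; push_cast; ring
    · have h := hβpos (-1) hsm1 1 hs1
      convert h using 2
      simp [emb, hrp]; push_cast; ring
    · have h := hγpos 1 hs1 1 hs1
      convert h using 2
      simp [emb, hrp]; push_cast; ring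
    · have h := hγpos (-1) hsm1 1 hs1
      convert h using 2
      simp [emb, hrp]; push_cast; ring
  · rcases Nat.lt_or_ge p 2 with hp2 | hp2
    · -- p = 1 case
      have hp1 : p = 1 := by omega
      subst hp1
      have hrq : r = q := by
        rw [hr, Nat.gcd_one_left]
        simp
      have hone : Real.sqrt ((1 : ℕ) : ℝ) = 1 := by norm_num
      set sq := Real.sqrt q with hsq_def
      have hsq2 : sq ^ 2 = (q : ℝ) := Real.sq_sqrt (by positivity)
      have hiq : Irrational sq := irr_sqrt hq2 hq
      have hinj2 : ∀ a b : ℚ, (a : ℝ) + b * sq = 0 → a = 0 ∧ b = 0 := fun a b h => indep2 hiq h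
      have cq : (((q : ℚ)) : ℝ) = (q : ℝ) := by norm_cast
      -- integrality of (a+b) + (c+d) sq
      have e1 : emb 1 q r 1 1 (a, b, c, d) = ev2 sq ((a + b : ℚ), (c + d : ℚ)) := by
        simp [emb, ev2, hone, hrq]
        push_cast
        ring
      have I1 : IsIntegral ℤ (ev2 sq ((a + b : ℚ), (c + d : ℚ))) := by rw [← e1]; exact hβint
      have I1' : IsIntegral ℤ (ev2 (-sq) ((a + b : ℚ), (c + d : ℚ))) := by
        refine conj2 (q := (q : ℚ)) ?_ ?_ hinj2 I1
        · rw [cq]; exact hsq2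
        · rw [cq]; linear_combination hsq2
      -- positivity facts
      have P1 : 0 < ((a : ℝ) + b) + ((c : ℝ) + d) * sq := by
        have h := hβpos 1 hs1 1 hs1
        convert h using 2
        simp [emb, hone, hrq]; push_cast; ring
      have P2 : 0 < ((a : ℝ) + b) - ((c : ℝ) + d) * sq := by
        have h := hβpos 1 hs1 (-1) hsm1
        convert h using 2
        simp [emb, hone, hrq]; push_cast; ring
      have P3 : 0 < (((x : ℝ) - a) + ((y : ℝ) - b)) - ((c : ℝ) + d) * sq := by
        have h := hγpos 1 hs1 1 hs1
        convert h using 2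
        simp [emb, hone, hrq]; push_cast; ring
      have P4 : 0 < (((x : ℝ) - a) + ((y : ℝ) - b)) + ((c : ℝ) + d) * sq := by
        have h := hγpos 1 hs1 (-1) hsm1
        convert h using 2
        simp [emb, hone, hrq]; push_cast; ring
      have hxy : (0 : ℝ) < (x : ℝ) - y := by
        have := hposq.2
        rw [hone] at this
        linarith
      rcases eq_or_ne (c + d) 0 with hv | hv
      · -- decomposes already in Q, contradiction
        exfalso
        apply hindq
        have hvr : ((c : ℝ) + d) = 0 := by exact_mod_cast hv
        refine ⟨(a + b + (x - y) / 2) / 2, (a + b - (x - y) / 2) / 2,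
          x - (a + b + (x - y) / 2) / 2, y - (a + b - (x - y) / 2) / 2,
          ?_, ?_, ⟨?_, ?_⟩, ⟨?_, ?_⟩, by ring, by ring⟩
        · have e : (((a + b + (x - y) / 2) / 2 : ℚ) : ℝ)
              + (((a + b - (x - y) / 2) / 2 : ℚ) : ℝ) * Real.sqrt (1 : ℕ)
              = ev2 sq ((a + b : ℚ), (c + d : ℚ)) := by
            rw [hone, ev2, hv]
            push_cast
            ring
          rw [e]; exact I1
        · have e : ((x - (a + b + (x - y) / 2) / 2 : ℚ) : ℝ)
              + ((y - (a + b - (x - y) / 2) / 2 : ℚ) : ℝ) * Real.sqrt (1 : ℕ)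
              = emb 1 q r 1 1 (x - a, y - b, -c, -d) := by
            have hvr : (c : ℝ) + d = 0 := by exact_mod_cast hv
            simp [emb, hone, hrq]
            push_cast
            linear_combination (Real.sqrt (q : ℝ)) * hvr
          rw [e]; exact hγint
        · rw [hone]; push_cast; linarith only [P1, P2]
        · rw [hone]; push_cast; linarith only [hxy]
        · rw [hone]; push_cast; linarith only [P3, P4]
        · rw [hone]; push_cast; linarith only [hxy]
      · -- min q r = q < 16 x^2
        have hvabs : (1 : ℝ) / 2 ≤ |((c + d : ℚ) : ℝ)| := by
          refine keyQ (e := a + b) (f := c + d) hq hv ?_ ?_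
          · have e : ((a + b : ℚ) : ℝ) + ((c + d : ℚ) : ℝ) * Real.sqrt q
                = ev2 sq ((a + b : ℚ), (c + d : ℚ)) := by rw [ev2]
            rw [e]; exact I1
          · have e : ((a + b : ℚ) : ℝ) - ((c + d : ℚ) : ℝ) * Real.sqrt q
                = ev2 (-sq) ((a + b : ℚ), (c + d : ℚ)) := by rw [ev2]; ring
            rw [e]; exact I1'
        have hvabs' : (1 : ℝ) / 2 ≤ |(c : ℝ) + d| := by
          have : ((c + d : ℚ) : ℝ) = (c : ℝ) + d := by push_cast; ring
          rwa [this] at hvabs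
        have habs : |((c : ℝ) + d) * sq| < ((a : ℝ) + b) := abs_lt.mpr ⟨by linarith, by linarith⟩
        have habs2 : |((c : ℝ) + d) * sq| < (((x : ℝ) - a) + ((y : ℝ) - b)) :=
          abs_lt.mpr ⟨by linarith, by linarith⟩
        have hsq0 : (0 : ℝ) ≤ sq := Real.sqrt_nonneg _
        have hprod : sq / 2 ≤ |((c : ℝ) + d) * sq| := by
          rw [abs_mul, abs_of_nonneg hsq0]
          have := mul_le_mul_of_nonneg_right hvabs' hsq0
          linarith only [this]
        have h2x : sq < 2 * (x : ℝ) := by linarith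
        have hq4 : (q : ℝ) < 4 * (x : ℝ) ^ 2 := by
          have h1 := mul_self_lt_mul_self hsq0 h2x
          have h2 := Real.mul_self_sqrt (show (0:ℝ) ≤ (q:ℝ) by positivity)
          linarith only [h1, h2]
        have hgoal : ((min q r : ℕ) : ℝ) < ((16 * x ^ 2 : ℚ) : ℝ) := by
          rw [hrq, min_self]
          push_cast
          linarith only [hq4, sq_nonneg (x : ℝ)]
        exact_mod_cast hgoal
    · -- main case : p, q ≥ 2
      set g := Nat.gcd p q with hg_def
      have hg0 : 0 < g := by
        rcases Nat.eq_zero_or_pos g with h | h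
        · exfalso
          rw [hg_def] at h
          have := Nat.gcd_eq_zero_iff.mp h
          omega
        · exact h
      set p₁ := p / g with hp₁_def
      set q₁ := q / g with hq₁_def
      have hpfac : g * p₁ = p := Nat.mul_div_cancel' (Nat.gcd_dvd_left p q)
      have hqfac : g * q₁ = q := Nat.mul_div_cancel' (Nat.gcd_dvd_right p q)
      have hrfac : r = p₁ * q₁ := by
        rw [hr]
        have h1 : p * q = g ^ 2 * (p₁ * q₁) := by rw [← hpfac, ← hqfac]; ring
        rw [h1, Nat.mul_div_cancel_left _ (by positivity)]
      have hPQn : p * q = g ^ 2 * r := by rw [hrfac, ← hpfac, ← hqfac]; ring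
      have hPRn : p * r = p₁ ^ 2 * q := by rw [hrfac, ← hpfac, ← hqfac]; ring
      have hQRn : q * r = q₁ ^ 2 * p := by rw [hrfac, ← hpfac, ← hqfac]; ring
      have hcop : Nat.Coprime p₁ q₁ := Nat.coprime_div_gcd_div_gcd hg0
      have hsfp₁ : Squarefree p₁ :=
        Squarefree.squarefree_of_dvd ⟨g, by rw [← hpfac]; ring⟩ hp
      have hsfq₁ : Squarefree q₁ :=
        Squarefree.squarefree_of_dvd ⟨g, by rw [← hqfac]; ring⟩ hq
      have hsfr : Squarefree r := by
        rw [hrfac]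
        exact (Nat.squarefree_mul hcop).mpr ⟨hsfp₁, hsfq₁⟩
      have hp₁0 : 0 < p₁ := Nat.div_pos (Nat.le_of_dvd hp0 (Nat.gcd_dvd_left p q)) hg0
      have hq₁0 : 0 < q₁ := Nat.div_pos (Nat.le_of_dvd hq0 (Nat.gcd_dvd_right p q)) hg0
      have hr2 : 2 ≤ r := by
        have hrne1 : r ≠ 1 := by
          intro h1
          rw [hrfac] at h1
          have e1 : p₁ = 1 := Nat.eq_one_of_mul_eq_one_right h1
          have e2 : q₁ = 1 := Nat.eq_one_of_mul_eq_one_left h1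
          apply hpq
          rw [← hpfac, ← hqfac, e1, e2]
        have hrpos : 0 < r := by rw [hrfac]; positivity
        omega
      have hip : Irrational (Real.sqrt p) := irr_sqrt hp2 hp
      have hiq : Irrational (Real.sqrt q) := irr_sqrt hq2 hq
      have hir : Irrational (Real.sqrt r) := irr_sqrt hr2 hsfr
      set sp := Real.sqrt p with hsp_def
      set sq := Real.sqrt q with hsq_def
      set sr := Real.sqrt r with hsr_def
      have hsp2 : sp ^ 2 = (p : ℝ) := Real.sq_sqrt (by positivity)
      have hsq2 : sq ^ 2 = (q : ℝ) := Real.sq_sqrt (by positivity)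
      have hsr2 : sr ^ 2 = (r : ℝ) := Real.sq_sqrt (by positivity)
      have hsq0 : (0 : ℝ) ≤ sq := Real.sqrt_nonneg _
      have hsr0 : (0 : ℝ) ≤ sr := Real.sqrt_nonneg _
      have hPQ' : sp * sq = (g : ℝ) * sr := sqrt_mul_sqrt p q r g hPQn
      have hPR' : sp * sr = (p₁ : ℝ) * sq := sqrt_mul_sqrt p r q p₁ hPRn
      have hQR' : sq * sr = (q₁ : ℝ) * sp := sqrt_mul_sqrt q r p q₁ hQRn
      by_cases hczero : c = 0 ∧ d = 0
      · -- contradiction with indecomposability over Q(sqrt p)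
        obtain ⟨hc, hd⟩ := hczero
        exfalso
        apply hindq
        refine ⟨a, b, x - a, y - b, ?_, ?_, ⟨?_, ?_⟩, ⟨?_, ?_⟩, by ring, by ring⟩
        · have e : emb p q r 1 1 (a, b, c, d) = (a : ℝ) + (b : ℝ) * sp := by
            simp only [emb, hc, hd]; push_cast; ring
          rw [← e]; exact hβint
        · have e : emb p q r 1 1 (x - a, y - b, -c, -d)
              = ((x - a : ℚ) : ℝ) + ((y - b : ℚ) : ℝ) * sp := by
            simp only [emb, hc, hd]; push_cast; ring
          rw [← e]; exact hγint
        · have h := hβpos 1 hs1 1 hs1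
          convert h using 2
          simp only [emb, hc, hd]; push_cast; ring
        · have h := hβpos (-1) hsm1 1 hs1
          convert h using 2
          simp only [emb, hc, hd]; push_cast; ring
        · have h := hγpos 1 hs1 1 hs1
          convert h using 2
          simp only [emb, hc, hd]; push_cast; ring
        · have h := hγpos (-1) hsm1 1 hs1
          convert h using 2
          simp only [emb, hc, hd]; push_cast; ring
      · -- genuine biquadratic decomposition
        have cp : (((p : ℕ) : ℚ) : ℝ) = ((p : ℕ) : ℝ) := by norm_cast
        have cq : (((q : ℕ) : ℚ) : ℝ) = ((q : ℕ) : ℝ) := by norm_cast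
        have cr : (((r : ℕ) : ℚ) : ℝ) = ((r : ℕ) : ℝ) := by norm_cast
        have cg : (((g : ℕ) : ℚ) : ℝ) = ((g : ℕ) : ℝ) := by norm_cast
        have cp₁ : (((p₁ : ℕ) : ℚ) : ℝ) = ((p₁ : ℕ) : ℝ) := by norm_cast
        have cq₁ : (((q₁ : ℕ) : ℚ) : ℝ) = ((q₁ : ℕ) : ℝ) := by norm_cast
        have rel1 : Rel4 (p : ℚ) (q : ℚ) (r : ℚ) (q₁ : ℚ) (p₁ : ℚ) (g : ℚ) sp sq sr :=
          ⟨by rw [cp]; exact hsp2, by rw [cq]; exact hsq2, by rw [cr]; exact hsr2,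
           by rw [cg]; exact hPQ', by rw [cp₁]; exact hPR', by rw [cq₁]; exact hQR'⟩
        have rel2 : Rel4 (p : ℚ) (q : ℚ) (r : ℚ) (q₁ : ℚ) (p₁ : ℚ) (g : ℚ) (-sp) sq (-sr) :=
          ⟨by rw [cp]; linear_combination hsp2, by rw [cq]; exact hsq2,
           by rw [cr]; linear_combination hsr2,
           by rw [cg]; linear_combination (-1 : ℝ) * hPQ',
           by rw [cp₁]; linear_combination hPR',
           by rw [cq₁]; linear_combination (-1 : ℝ) * hQR'⟩
        have rel3 : Rel4 (p : ℚ) (q : ℚ) (r : ℚ) (q₁ : ℚ) (p₁ : ℚ) (g : ℚ) sp (-sq) (-sr) :=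
          ⟨by rw [cp]; exact hsp2, by rw [cq]; linear_combination hsq2,
           by rw [cr]; linear_combination hsr2,
           by rw [cg]; linear_combination (-1 : ℝ) * hPQ',
           by rw [cp₁]; linear_combination (-1 : ℝ) * hPR',
           by rw [cq₁]; linear_combination hQR'⟩
        have rel4 : Rel4 (p : ℚ) (q : ℚ) (r : ℚ) (q₁ : ℚ) (p₁ : ℚ) (g : ℚ) (-sp) (-sq) sr :=
          ⟨by rw [cp]; linear_combination hsp2, by rw [cq]; linear_combination hsq2,
           by rw [cr]; exact hsr2,
           by rw [cg]; linear_combination hPQ',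
           by rw [cp₁]; linear_combination (-1 : ℝ) * hPR',
           by rw [cq₁]; linear_combination (-1 : ℝ) * hQR'⟩
        have hinj : ∀ A B C D : ℚ, (A : ℝ) + B * sp + C * sq + D * sr = 0 →
            A = 0 ∧ B = 0 ∧ C = 0 ∧ D = 0 :=
          fun A B C D h => indep4 p q r p₁ q₁ g hPRn hQRn hPQn hip hiq hir h
        have eβ : emb p q r 1 1 (a, b, c, d) = ev4 sp sq sr (a, b, c, d) := by
          simp [emb, ev4, hsp_def, hsq_def, hsr_def]
        have I1 : IsIntegral ℤ (ev4 sp sq sr (a, b, c, d)) := by rw [← eβ]; exact hβint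
        have I2 := conj4 rel1 rel2 hinj I1
        have I3 := conj4 rel1 rel3 hinj I1
        have I4 := conj4 rel1 rel4 hinj I1
        have Tc1 : IsIntegral ℤ (((2 * a : ℚ) : ℝ) + ((2 * c : ℚ) : ℝ) * Real.sqrt q) := by
          have h := I1.add I2
          have e : ev4 sp sq sr (a, b, c, d) + ev4 (-sp) sq (-sr) (a, b, c, d)
              = ((2 * a : ℚ) : ℝ) + ((2 * c : ℚ) : ℝ) * sq := by
            simp [ev4]; push_cast; ring
          rwa [e] at h
        have Tc2 : IsIntegral ℤ (((2 * a : ℚ) : ℝ) - ((2 * c : ℚ) : ℝ) * Real.sqrt q) := by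
          have h := I3.add I4
          have e : ev4 sp (-sq) (-sr) (a, b, c, d) + ev4 (-sp) (-sq) sr (a, b, c, d)
              = ((2 * a : ℚ) : ℝ) - ((2 * c : ℚ) : ℝ) * sq := by
            simp [ev4]; push_cast; ring
          rwa [e] at h
        have Td1 : IsIntegral ℤ (((2 * a : ℚ) : ℝ) + ((2 * d : ℚ) : ℝ) * Real.sqrt r) := by
          have h := I1.add I4
          have e : ev4 sp sq sr (a, b, c, d) + ev4 (-sp) (-sq) sr (a, b, c, d)
              = ((2 * a : ℚ) : ℝ) + ((2 * d : ℚ) : ℝ) * sr := by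
            simp [ev4]; push_cast; ring
          rwa [e] at h
        have Td2 : IsIntegral ℤ (((2 * a : ℚ) : ℝ) - ((2 * d : ℚ) : ℝ) * Real.sqrt r) := by
          have h := I2.add I3
          have e : ev4 (-sp) sq (-sr) (a, b, c, d) + ev4 sp (-sq) (-sr) (a, b, c, d)
              = ((2 * a : ℚ) : ℝ) - ((2 * d : ℚ) : ℝ) * sr := by
            simp [ev4]; push_cast; ring
          rwa [e] at h
        -- positivity of all eight embeddings
        have E11 : 0 < (a : ℝ) + (b : ℝ) * sp + (c : ℝ) * sq + (d : ℝ) * sr := by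
          have h := hβpos 1 hs1 1 hs1
          convert h using 2
          simp only [emb]; push_cast; ring
        have E1m : 0 < (a : ℝ) + (b : ℝ) * sp - (c : ℝ) * sq - (d : ℝ) * sr := by
          have h := hβpos 1 hs1 (-1) hsm1
          convert h using 2
          simp only [emb]; push_cast; ring
        have Em1 : 0 < (a : ℝ) - (b : ℝ) * sp + (c : ℝ) * sq - (d : ℝ) * sr := by
          have h := hβpos (-1) hsm1 1 hs1
          convert h using 2
          simp only [emb]; push_cast; ring
        have Emm : 0 < (a : ℝ) - (b : ℝ) * sp - (c : ℝ) * sq + (d : ℝ) * sr := by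
          have h := hβpos (-1) hsm1 (-1) hsm1
          convert h using 2
          simp only [emb]; push_cast; ring
        have G11 : 0 < ((x : ℝ) - a) + ((y : ℝ) - b) * sp - (c : ℝ) * sq - (d : ℝ) * sr := by
          have h := hγpos 1 hs1 1 hs1
          convert h using 2
          simp only [emb]; push_cast; ring
        have G1m : 0 < ((x : ℝ) - a) + ((y : ℝ) - b) * sp + (c : ℝ) * sq + (d : ℝ) * sr := by
          have h := hγpos 1 hs1 (-1) hsm1
          convert h using 2
          simp only [emb]; push_cast; ring
        have Gm1 : 0 < ((x : ℝ) - a) - ((y : ℝ) - b) * sp - (c : ℝ) * sq + (d : ℝ) * sr := by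
          have h := hγpos (-1) hsm1 1 hs1
          convert h using 2
          simp only [emb]; push_cast; ring
        have Gmm : 0 < ((x : ℝ) - a) - ((y : ℝ) - b) * sp + (c : ℝ) * sq - (d : ℝ) * sr := by
          have h := hγpos (-1) hsm1 (-1) hsm1
          convert h using 2
          simp only [emb]; push_cast; ring
        have hK1β : |(c : ℝ) * sq + (d : ℝ) * sr| < (a : ℝ) + (b : ℝ) * sp :=
          abs_lt.mpr ⟨by linarith, by linarith⟩
        have hK1γ : |(c : ℝ) * sq + (d : ℝ) * sr| < ((x : ℝ) - a) + ((y : ℝ) - b) * sp :=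
          abs_lt.mpr ⟨by linarith, by linarith⟩
        have hK2β : |(c : ℝ) * sq - (d : ℝ) * sr| < (a : ℝ) - (b : ℝ) * sp :=
          abs_lt.mpr ⟨by linarith, by linarith⟩
        have hK2γ : |(c : ℝ) * sq - (d : ℝ) * sr| < ((x : ℝ) - a) - ((y : ℝ) - b) * sp :=
          abs_lt.mpr ⟨by linarith, by linarith⟩
        set m : ℕ := min q r with hm_def
        have hm0 : (0 : ℝ) ≤ ((m : ℕ) : ℝ) := by positivity
        have hsm0 : (0 : ℝ) ≤ Real.sqrt ((m : ℕ) : ℝ) := Real.sqrt_nonneg _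
        have hlow : Real.sqrt ((m : ℕ) : ℝ)
            ≤ 2 * (|(c : ℝ) * sq + (d : ℝ) * sr| + |(c : ℝ) * sq - (d : ℝ) * sr|) := by
          rcases not_and_or.mp hczero with hc | hd
          · have h2c : (2 : ℚ) * c ≠ 0 := by simpa using hc
            have hkey := keyQ (e := 2 * a) (f := 2 * c) hq h2c Tc1 Tc2
            have habs2c : |((2 * c : ℚ) : ℝ)| = 2 * |(c : ℝ)| := by
              push_cast
              rw [abs_mul]
              norm_num
            have hc4 : (1 : ℝ) / 4 ≤ |(c : ℝ)| := by
              rw [habs2c] at hkey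
              linarith
            have hmq : Real.sqrt ((m : ℕ) : ℝ) ≤ sq := by
              apply Real.sqrt_le_sqrt
              exact_mod_cast Nat.cast_le.mpr (min_le_left q r)
            have h1 : |((c : ℝ) * sq + (d : ℝ) * sr) + ((c : ℝ) * sq - (d : ℝ) * sr)|
                ≤ |(c : ℝ) * sq + (d : ℝ) * sr| + |(c : ℝ) * sq - (d : ℝ) * sr| := abs_add_le _ _
            have h2 : |((c : ℝ) * sq + (d : ℝ) * sr) + ((c : ℝ) * sq - (d : ℝ) * sr)|
                = 2 * (|(c : ℝ)| * sq) := by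
              rw [show ((c : ℝ) * sq + (d : ℝ) * sr) + ((c : ℝ) * sq - (d : ℝ) * sr)
                  = 2 * ((c : ℝ) * sq) by ring, abs_mul, abs_mul, abs_of_nonneg hsq0, abs_two]
            have h3 := mul_le_mul_of_nonneg_right hc4 hsq0
            linarith only [h1, h2, h3, hmq]
          · have h2d : (2 : ℚ) * d ≠ 0 := by simpa using hd
            have hkey := keyQ (e := 2 * a) (f := 2 * d) hsfr h2d Td1 Td2
            have habs2d : |((2 * d : ℚ) : ℝ)| = 2 * |(d : ℝ)| := by
              push_cast
              rw [abs_mul]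
              norm_num
            have hd4 : (1 : ℝ) / 4 ≤ |(d : ℝ)| := by
              rw [habs2d] at hkey
              linarith
            have hmr : Real.sqrt ((m : ℕ) : ℝ) ≤ sr := by
              apply Real.sqrt_le_sqrt
              exact_mod_cast Nat.cast_le.mpr (min_le_right q r)
            have h1 : |((c : ℝ) * sq + (d : ℝ) * sr) - ((c : ℝ) * sq - (d : ℝ) * sr)|
                ≤ |(c : ℝ) * sq + (d : ℝ) * sr| + |(c : ℝ) * sq - (d : ℝ) * sr| := abs_sub _ _
            have h2 : |((c : ℝ) * sq + (d : ℝ) * sr) - ((c : ℝ) * sq - (d : ℝ) * sr)|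
                = 2 * (|(d : ℝ)| * sr) := by
              rw [show ((c : ℝ) * sq + (d : ℝ) * sr) - ((c : ℝ) * sq - (d : ℝ) * sr)
                  = 2 * ((d : ℝ) * sr) by ring, abs_mul, abs_mul, abs_of_nonneg hsr0, abs_two]
            have h3 := mul_le_mul_of_nonneg_right hd4 hsr0
            linarith only [h1, h2, h3, hmr]
        have hfin : Real.sqrt ((m : ℕ) : ℝ) < 2 * (x : ℝ) := by linarith
        have hmlt : ((m : ℕ) : ℝ) < 4 * (x : ℝ) ^ 2 := by
          have h1 := mul_self_lt_mul_self hsm0 hfin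
          have h2 := Real.mul_self_sqrt hm0
          linarith only [h1, h2]
        have hgoal : ((m : ℕ) : ℝ) < ((16 * x ^ 2 : ℚ) : ℝ) := by
          push_cast
          push_cast at hmlt
          linarith only [sq_nonneg (x : ℝ), hmlt]
        exact_mod_cast hgoal
end

section
/- Let K = Q(√p,√q) be a totally real biquadratic field with r = pq/gcd(p,q)², and let α, β ∈ O_K with β = a + b√p + c√q + d√r (a,b,c,d ∈ Q). If 0 ≺ β ≺ α (β and α − β totally positive), then |a| ≤ Tr(α)/4, |b| ≤ Tr(α)/(4√p), |c| ≤ Tr(α)/(4√q), and |d| ≤ Tr(α)/(4√r). -/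
theorem stmt_7 (p q r : ℕ) (hp : Squarefree p) (hq : Squarefree q) (hpq : p ≠ q)
    (hp0 : 0 < p) (hq0 : 0 < q) (hr : r = p * q / (Nat.gcd p q) ^ 2)
    (A B C D a b c d : ℚ)
    (hA : IsIntK p q r (A, B, C, D)) (hB : IsIntK p q r (a, b, c, d))
    (h1 : TotPos p q r (a, b, c, d))
    (h2 : TotPos p q r ((A, B, C, D) - (a, b, c, d))) :
    |(a : ℝ)| ≤ 4 * (A : ℝ) / 4 ∧
    |(b : ℝ)| ≤ 4 * (A : ℝ) / (4 * Real.sqrt p) ∧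
    |(c : ℝ)| ≤ 4 * (A : ℝ) / (4 * Real.sqrt q) ∧
    |(d : ℝ)| ≤ 4 * (A : ℝ) / (4 * Real.sqrt r) := by
  have hmem1 : (1:ℤ) ∈ Sgn := Or.inl rfl
  have hmem2 : (-1:ℤ) ∈ Sgn := Or.inr rfl
  have hgp : Nat.gcd p q ≤ p := Nat.le_of_dvd hp0 (Nat.gcd_dvd_left p q)
  have hgq : Nat.gcd p q ≤ q := Nat.le_of_dvd hq0 (Nat.gcd_dvd_right p q)
  have hr0 : 0 < r := by
    subst hr
    exact Nat.div_pos (by rw [sq]; exact Nat.mul_le_mul hgp hgq) (pow_pos (Nat.gcd_pos_of_pos_left q hp0) 2)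
  have hx : (0:ℝ) < Real.sqrt p := Real.sqrt_pos.mpr (by exact_mod_cast hp0)
  have hy : (0:ℝ) < Real.sqrt q := Real.sqrt_pos.mpr (by exact_mod_cast hq0)
  have hz : (0:ℝ) < Real.sqrt r := Real.sqrt_pos.mpr (by exact_mod_cast hr0)
  have e11 := h1 1 hmem1 1 hmem1
  have e12 := h1 1 hmem1 (-1) hmem2
  have e21 := h1 (-1) hmem2 1 hmem1
  have e22 := h1 (-1) hmem2 (-1) hmem2
  have E11 := h2 1 hmem1 1 hmem1
  have E12 := h2 1 hmem1 (-1) hmem2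
  have E21 := h2 (-1) hmem2 1 hmem1
  have E22 := h2 (-1) hmem2 (-1) hmem2
  simp only [emb, Prod.fst_sub, Prod.snd_sub, Rat.cast_sub, Int.cast_one, Int.cast_neg,
    one_mul, neg_mul, neg_neg, mul_one] at e11 e12 e21 e22 E11 E12 E21 E22
  refine ⟨?_, ?_, ?_, ?_⟩
  · rw [abs_le]
    exact ⟨by linarith, by linarith⟩
  · rw [le_div_iff₀ (by positivity)]
    have key : |(b:ℝ) * Real.sqrt p| ≤ A := abs_le.mpr ⟨by linarith, by linarith⟩
    have h4 : |(b:ℝ)| * (4 * Real.sqrt p) = 4 * |(b:ℝ) * Real.sqrt p| := by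
      rw [abs_mul, abs_of_pos hx]; ring
    linarith [h4, key]
  · rw [le_div_iff₀ (by positivity)]
    have key : |(c:ℝ) * Real.sqrt q| ≤ A := abs_le.mpr ⟨by linarith, by linarith⟩
    have h4 : |(c:ℝ)| * (4 * Real.sqrt q) = 4 * |(c:ℝ) * Real.sqrt q| := by
      rw [abs_mul, abs_of_pos hy]; ring
    linarith [h4, key]
  · rw [le_div_iff₀ (by positivity)]
    have key : |(d:ℝ) * Real.sqrt r| ≤ A := abs_le.mpr ⟨by linarith, by linarith⟩
    have h4 : |(d:ℝ)| * (4 * Real.sqrt r) = 4 * |(d:ℝ) * Real.sqrt r| := by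
      rw [abs_mul, abs_of_pos hz]; ring
    linarith [h4, key]
end

section
/- Let K = Q(√p,√q) with r = pq/gcd(p,q)², and let α, β ∈ O_K with β = a + b√p + c√q + d√r. If β² ≺ α (i.e., α − β² is totally positive), then a² ≤ Tr(α)/4, b² ≤ Tr(α)/(4p), c² ≤ Tr(α)/(4q), and d² ≤ Tr(α)/(4r). -/
theorem stmt_8 (p q r : ℕ) (hp : Squarefree p) (hq : Squarefree q) (hpq : p ≠ q)
    (hp0 : 0 < p) (hq0 : 0 < q) (hr : r = p * q / (Nat.gcd p q) ^ 2)
    (A B C D a b c d : ℚ)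
    (hA : IsIntK p q r (A, B, C, D)) (hB : IsIntK p q r (a, b, c, d))
    (h2 : ∀ s ∈ Sgn, ∀ t ∈ Sgn,
      0 < emb p q r s t (A, B, C, D) - (emb p q r s t (a, b, c, d)) ^ 2) :
    (a : ℝ) ^ 2 ≤ 4 * (A : ℝ) / 4 ∧
    (b : ℝ) ^ 2 ≤ 4 * (A : ℝ) / (4 * (p : ℝ)) ∧
    (c : ℝ) ^ 2 ≤ 4 * (A : ℝ) / (4 * (q : ℝ)) ∧
    (d : ℝ) ^ 2 ≤ 4 * (A : ℝ) / (4 * (r : ℝ)) := by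
  have h1 : (1:ℤ) ∈ Sgn := Or.inl rfl
  have hm1 : (-1:ℤ) ∈ Sgn := Or.inr rfl
  have e11 := h2 1 h1 1 h1
  have e1m := h2 1 h1 (-1) hm1
  have em1 := h2 (-1) hm1 1 h1
  have emm := h2 (-1) hm1 (-1) hm1
  have hr0 : 0 < r := by
    subst hr
    apply Nat.div_pos
    · exact Nat.le_of_dvd (Nat.mul_pos hp0 hq0)
        (by rw [pow_two]; exact mul_dvd_mul (Nat.gcd_dvd_left p q) (Nat.gcd_dvd_right p q))
    · exact pow_pos (Nat.gcd_pos_of_pos_left q hp0) 2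
  have hpR : (0:ℝ) < (p:ℝ) := by exact_mod_cast hp0
  have hqR : (0:ℝ) < (q:ℝ) := by exact_mod_cast hq0
  have hrR : (0:ℝ) < (r:ℝ) := by exact_mod_cast hr0
  have sp : Real.sqrt p ^ 2 = p := Real.sq_sqrt (by positivity)
  have sq : Real.sqrt q ^ 2 = q := Real.sq_sqrt (by positivity)
  have sr : Real.sqrt r ^ 2 = r := Real.sq_sqrt (by positivity)
  simp only [emb] at e11 e1m em1 emm
  push_cast at e11 e1m em1 emm
  have key : (a:ℝ)^2 + (p:ℝ) * b^2 + (q:ℝ) * c^2 + (r:ℝ) * d^2 ≤ (A:ℝ) := by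
    have h := add_pos (add_pos (add_pos e11 e1m) em1) emm
    rw [← sp, ← sq, ← sr]
    nlinarith [h]
  clear e11 e1m em1 emm h2 hA hB sp sq sr
  have nb := mul_nonneg hpR.le (sq_nonneg (b:ℝ))
  have nc := mul_nonneg hqR.le (sq_nonneg (c:ℝ))
  have nd := mul_nonneg hrR.le (sq_nonneg (d:ℝ))
  have na := sq_nonneg (a:ℝ)
  refine ⟨by linarith, ?_, ?_, ?_⟩
  · rw [le_div_iff₀ (by positivity)]; linarith
  · rw [le_div_iff₀ (by positivity)]; linarith
  · rw [le_div_iff₀ (by positivity)]; linarith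
end

section
/- Let K be a totally real number field and suppose α_1, …, α_n ∈ O_K are totally positive elements such that for all i ≠ j, the only γ ∈ O_K with α_i α_j − γ² totally nonnegative is γ = 0. Then there is no universal totally positive definite classical quadratic form over O_K in n − 1 variables. -/
open NumberField

/-- Cauchy–Schwarz for a real positive semidefinite matrix, assuming the second
vector has positive norm. -/
lemma aux_cs {m : Type*} [Fintype m] (A : Matrix m m ℝ) (hA : A.PosSemidef)
    (v w : m → ℝ) (hc : 0 < dotProduct w (A.mulVec w)) :
    (dotProduct v (A.mulVec w)) ^ 2 ≤
      dotProduct v (A.mulVec v) * dotProduct w (A.mulVec w) := by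
  have hAt : A.transpose = A := by
    funext i j
    have h := congrFun (congrFun hA.1 i) j
    simpa using h
  have hsymm : ∀ x y : m → ℝ, dotProduct x (A.mulVec y)
      = dotProduct y (A.mulVec x) := by
    intro x y
    rw [Matrix.dotProduct_mulVec x A y, ← Matrix.mulVec_transpose, hAt,
      dotProduct_comm]
  set a := dotProduct v (A.mulVec v) with ha
  set b := dotProduct v (A.mulVec w) with hb
  set c := dotProduct w (A.mulVec w) with hcdef
  have h0 := hA.dotProduct_mulVec_nonneg (c • v - b • w)
  rw [star_trivial] at h0
  have hexp : dotProduct (c • v - b • w) (A.mulVec (c • v - b • w))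
      = c ^ 2 * a - 2 * c * b ^ 2 + b ^ 2 * c := by
    have hwv : dotProduct w (A.mulVec v) = b := (hsymm w v).trans hb.symm
    simp only [Matrix.mulVec_sub, Matrix.mulVec_smul, sub_dotProduct,
      dotProduct_sub, smul_dotProduct, dotProduct_smul,
      smul_eq_mul, ← ha, ← hb, ← hcdef, hwv]
    ring
  rw [hexp] at h0
  nlinarith [h0, hc]

/-- A ring hom applied to a quadratic-form value. -/
lemma aux_map {R S : Type*} [CommRing R] [CommRing S] {m : Type*} [Fintype m]
    (f : R →+* S) (M : Matrix m m R) (u u' : m → R) :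
    f (dotProduct u (M.mulVec u'))
      = dotProduct (f ∘ u) ((M.map f).mulVec (f ∘ u')) := by
  rw [RingHom.map_dotProduct]
  congr 1
  funext i
  exact RingHom.map_mulVec f M u' i

theorem stmt_11 (K : Type*) [Field K] [NumberField K]
    (htr : ∀ φ : K →+* ℂ, ∀ x : K, (φ x).im = 0)
    (n : ℕ) (α : Fin n → 𝓞 K)
    (hpos : ∀ i, ∀ φ : K →+* ℝ, 0 < φ (α i : K))
    (hkey : ∀ i j, i ≠ j → ∀ γ : 𝓞 K,
      (∀ φ : K →+* ℝ, 0 ≤ φ ((α i : K) * (α j : K) - (γ : K) ^ 2)) → γ = 0) :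
    ¬ ∃ M : Matrix (Fin (n - 1)) (Fin (n - 1)) (𝓞 K),
      (∀ i j, M i j = M j i) ∧
      (∀ φ : K →+* ℝ, (M.map (fun x => φ (x : K))).PosDef) ∧
      (∀ δ : 𝓞 K, (∀ φ : K →+* ℝ, 0 < φ (δ : K)) →
        ∃ v : Fin (n - 1) → 𝓞 K, δ = dotProduct v (M.mulVec v)) := by
  rintro ⟨M, hMsym, hMpos, huniv⟩
  -- construct a real embedding of K
  obtain ⟨ψ⟩ : Nonempty (K →+* ℂ) := inferInstance
  let φ0 : K →+* ℝ :=
    { toFun := fun x => (ψ x).re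
      map_one' := by simp
      map_mul' := fun x y => by
        show (ψ (x * y)).re = (ψ x).re * (ψ y).re
        rw [map_mul, Complex.mul_re, htr ψ x, htr ψ y]; ring
      map_zero' := by simp
      map_add' := fun x y => by
        show (ψ (x + y)).re = (ψ x).re + (ψ y).re
        rw [map_add, Complex.add_re] }
  -- small cases: n ≤ 1
  rcases Nat.lt_or_ge n 2 with hn | hn
  · obtain ⟨v, hv⟩ := huniv 1 (by intro φ; simp)
    have h0 : n - 1 = 0 := by omega
    have hempty : IsEmpty (Fin (n - 1)) := by rw [h0]; infer_instance
    have : (1 : 𝓞 K) = 0 := by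
      rw [hv, dotProduct]
      simp
    exact one_ne_zero this
  -- main case : n ≥ 2
  choose v hv using fun i => huniv (α i) (hpos i)
  -- for each real embedding this is the mapped data
  have hposdef : ∀ φ : K →+* ℝ,
      (M.map (φ.comp (algebraMap (𝓞 K) K))).PosDef := fun φ => hMpos φ
  have hnorm : ∀ (φ : K →+* ℝ) i,
      dotProduct ((φ.comp (algebraMap (𝓞 K) K)) ∘ v i)
        ((M.map (φ.comp (algebraMap (𝓞 K) K))).mulVec
          ((φ.comp (algebraMap (𝓞 K) K)) ∘ v i)) = φ (α i : K) := by
    intro φ i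
    rw [← aux_map (φ.comp (algebraMap (𝓞 K) K)) M (v i) (v i), ← hv i]
    rfl
  -- orthogonality
  have horth : ∀ i j, i ≠ j →
      dotProduct (v i) (M.mulVec (v j)) = 0 := by
    intro i j hij
    refine hkey i j hij _ ?_
    intro φ
    set F := φ.comp (algebraMap (𝓞 K) K) with hF
    have hcs := aux_cs (M.map F) (hposdef φ).posSemidef (F ∘ v i) (F ∘ v j)
      (by rw [hnorm φ j]; exact hpos j φ)
    rw [hnorm φ i, hnorm φ j] at hcs
    have hmap : φ (((dotProduct (v i) (M.mulVec (v j)) : 𝓞 K) : K))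
        = dotProduct (F ∘ v i) ((M.map F).mulVec (F ∘ v j)) := by
      rw [← aux_map F M (v i) (v j)]; rfl
    rw [map_sub, map_mul, map_pow, hmap]
    linarith [hcs]
  -- now show linear independence of the images of the v i under φ0
  set F0 := φ0.comp (algebraMap (𝓞 K) K) with hF0
  set A := M.map F0 with hA
  set w : Fin n → Fin (n - 1) → ℝ := fun i => F0 ∘ v i with hw
  have horthR : ∀ i j, i ≠ j →
      dotProduct (w i) (A.mulVec (w j)) = 0 := by
    intro i j hij
    rw [hw, hA, ← aux_map F0 M (v i) (v j), horth i j hij, map_zero]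
  have hlin : LinearIndependent ℝ w := by
    rw [Fintype.linearIndependent_iff]
    intro g hg j
    have h1 : dotProduct (w j) (A.mulVec (∑ i, g i • w i)) = 0 := by
      rw [hg]
      simp
    have h2 : A.mulVec (∑ i, g i • w i) = ∑ i, g i • A.mulVec (w i) := by
      rw [← Matrix.mulVecLin_apply, map_sum]
      simp [Matrix.mulVecLin_apply]
    have hdps : dotProduct (w j) (∑ i, g i • A.mulVec (w i))
        = ∑ i, dotProduct (w j) (g i • A.mulVec (w i)) := by
      simp only [dotProduct, Finset.sum_apply, Finset.mul_sum]
      rw [Finset.sum_comm]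
    rw [h2, hdps] at h1
    have h3 : ∀ i, dotProduct (w j) (g i • A.mulVec (w i))
        = g i * dotProduct (w j) (A.mulVec (w i)) := by
      intro i; rw [dotProduct_smul]; rfl
    simp only [h3] at h1
    rw [Finset.sum_eq_single j (fun i _ hij => by
        rw [horthR j i (Ne.symm hij), mul_zero]) (by intro h; exact absurd (Finset.mem_univ j) h)]
      at h1
    have h4 : dotProduct (w j) (A.mulVec (w j)) = φ0 (α j : K) := hnorm φ0 j
    rw [h4] at h1
    have := hpos j φ0
    rcases mul_eq_zero.mp h1 with h | h
    · exact h
    · exact absurd h (ne_of_gt this)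
  have hcard := hlin.fintype_card_le_finrank
  rw [Fintype.card_fin, Module.finrank_fin_fun] at hcard
  omega
end

section
/- Let K be a totally real number field, Q(x) = Σ_i α_i x_i² a diagonal totally positive definite quadratic form over O_K, and β ∈ O_K an indecomposable totally positive element. Then β is represented by Q over O_K if and only if there exists an index i such that β/α_i is a square in O_K. -/
open NumberField

theorem stmt_12 (K : Type*) [Field K] [NumberField K]
    (htr : ∀ φ : K →+* ℂ, ∀ x : K, (φ x).im = 0)
    (n : ℕ) (α : Fin n → 𝓞 K)
    (hα : ∀ i, ∀ φ : K →+* ℝ, 0 < φ (α i : K))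
    (β : 𝓞 K)
    (hβpos : ∀ φ : K →+* ℝ, 0 < φ (β : K))
    (hβind : ¬ ∃ x y : 𝓞 K, (∀ φ : K →+* ℝ, 0 < φ (x : K)) ∧
      (∀ φ : K →+* ℝ, 0 < φ (y : K)) ∧ β = x + y) :
    (∃ v : Fin n → 𝓞 K, β = ∑ i, α i * v i ^ 2) ↔
      ∃ i, ∃ γ : 𝓞 K, β = α i * γ ^ 2 := by
  -- construct a real embedding
  obtain ⟨φc⟩ : Nonempty (K →+* ℂ) := inferInstance
  let ψ : K →+* ℝ :=
    { toFun := fun x => (φc x).re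
      map_one' := by simp
      map_mul' := fun x y => by
        simp [Complex.mul_re, htr φc x, htr φc y]
      map_zero' := by simp
      map_add' := fun x y => by simp }
  constructor
  · rintro ⟨v, hv⟩
    -- some v i is nonzero
    have hne : ∃ i, v i ≠ 0 := by
      by_contra h
      push_neg at h
      have : β = 0 := by
        rw [hv]
        apply Finset.sum_eq_zero
        intro j _
        simp [h j]
      exact absurd (hβpos ψ) (by simp [this])
    obtain ⟨i, hi⟩ := hne
    refine ⟨i, v i, ?_⟩
    -- claim all other v j are zero
    have hothers : ∀ j, j ≠ i → v j = 0 := by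
      by_contra h
      push_neg at h
      obtain ⟨j, hji, hj⟩ := h
      apply hβind
      refine ⟨α i * v i ^ 2, ∑ k ∈ Finset.univ.erase i, α k * v k ^ 2, ?_, ?_, ?_⟩
      · intro φ
        have : ((α i * v i ^ 2 : 𝓞 K) : K) = (α i : K) * (v i : K) ^ 2 := by push_cast; ring
        rw [this, map_mul, map_pow]
        have hvi : φ (v i : K) ≠ 0 := by
          simp only [ne_eq, map_eq_zero]
          exact_mod_cast hi
        exact mul_pos (hα i φ) (by positivity)
      · intro φ
        have hc : ((∑ k ∈ Finset.univ.erase i, α k * v k ^ 2 : 𝓞 K) : K)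
            = ∑ k ∈ Finset.univ.erase i, (α k : K) * (v k : K) ^ 2 := by
          push_cast; ring
        rw [hc, map_sum]
        apply Finset.sum_pos'
        · intro k _
          rw [map_mul, map_pow]
          exact mul_nonneg (le_of_lt (hα k φ)) (by positivity)
        · refine ⟨j, Finset.mem_erase.mpr ⟨hji, Finset.mem_univ j⟩, ?_⟩
          rw [map_mul, map_pow]
          have hvj : φ (v j : K) ≠ 0 := by
            simp only [ne_eq, map_eq_zero]
            exact_mod_cast hj
          exact mul_pos (hα j φ) (by positivity)
      · rw [hv, ← Finset.add_sum_erase _ _ (Finset.mem_univ i)]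
    rw [hv]
    rw [← Finset.add_sum_erase _ _ (Finset.mem_univ i)]
    have : ∑ k ∈ Finset.univ.erase i, α k * v k ^ 2 = 0 := by
      apply Finset.sum_eq_zero
      intro k hk
      simp [hothers k (Finset.mem_erase.mp hk).1]
    rw [this, add_zero]
  · rintro ⟨i, γ, hγ⟩
    refine ⟨fun j => if j = i then γ else 0, ?_⟩
    rw [hγ, Finset.sum_eq_single i]
    · simp
    · intro j _ hji; simp [hji]
    · intro h; exact absurd (Finset.mem_univ i) h
end
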